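/- If n+1 ≡ 0 (mod 4), then f_0(n) ≥ √(n+1)/(2·cos(π/(n+1))). -/

import Mathlib

open Real Matrix

/-- `simplexInCube n ℓ` : an isometric copy of the regular n-simplex of edge length ℓ
with barycenter at the origin is contained in the cube [-1/2, 1/2]ⁿ. -/
def simplexInCube (n : ℕ) (ℓ : ℝ) : Prop :=
  ∃ p : Fin (n + 1) → EuclideanSpace ℝ (Fin n),
    (∀ i j, i ≠ j → dist (p i) (p j) = ℓ) ∧ (∑ i, p i = 0) ∧
    ∀ i k, |p i k| ≤ 1 / 2

/-- `f0 n` : the largest edge length of a regular n-simplex with barycenter at the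
origin contained in the unit cube. -/
noncomputable def f0 (n : ℕ) : ℝ := sSup {ℓ : ℝ | simplexInCube n ℓ}


namespace Stmt6Aux

open Finset

lemma exp_sum_eq_zero (m : ℕ) (hm : 0 < m) (d : ℤ) (hd : ¬ ((m:ℤ) ∣ d)) :
    ∑ f ∈ range m, Complex.exp ((2 * Real.pi * d * f / m : ℝ) * Complex.I) = 0 := by
  set z : ℂ := Complex.exp ((2 * Real.pi * d / m : ℝ) * Complex.I) with hz
  have hzf : ∀ f : ℕ, Complex.exp ((2 * Real.pi * d * f / m : ℝ) * Complex.I) = z ^ f := by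
    intro f
    rw [hz, ← Complex.exp_nat_mul]
    congr 1
    push_cast
    ring
  have hz1 : z ≠ 1 := by
    intro h
    rw [hz, Complex.exp_eq_one_iff] at h
    obtain ⟨k, hk⟩ := h
    have him := congrArg Complex.im hk
    simp at him
    apply hd
    refine ⟨k, ?_⟩
    have hm' : (m : ℝ) ≠ 0 := by positivity
    rw [div_eq_iff hm'] at him
    have : (d : ℝ) = (m : ℝ) * k := by
      nlinarith [Real.pi_pos]
    exact_mod_cast this
  have hzm : z ^ m = 1 := by
    rw [hz, ← Complex.exp_nat_mul]
    have hcalc : (m : ℂ) * (((2 * Real.pi * d / m : ℝ) : ℂ) * Complex.I)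
        = (d : ℂ) * (2 * Real.pi * Complex.I) := by
      have hm' : (m : ℂ) ≠ 0 := by exact_mod_cast Nat.cast_ne_zero.mpr hm.ne'
      push_cast
      field_simp
    rw [hcalc]
    simpa using Complex.exp_int_mul_two_pi_mul_I d
  calc ∑ f ∈ range m, Complex.exp ((2 * Real.pi * d * f / m : ℝ) * Complex.I)
      = ∑ f ∈ range m, z ^ f := Finset.sum_congr rfl (fun f _ => hzf f)
    _ = (z ^ m - 1) / (z - 1) := geom_sum_eq hz1 m
    _ = 0 := by rw [hzm]; simp

lemma cos_sum_eq_zero (m : ℕ) (hm : 0 < m) (d : ℤ) (hd : ¬ ((m:ℤ) ∣ d)) :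
    ∑ f ∈ range m, Real.cos (2 * Real.pi * d * f / m) = 0 := by
  have h := exp_sum_eq_zero m hm d hd
  have h2 := congrArg Complex.re h
  rw [Complex.re_sum] at h2
  simp only [Complex.exp_ofReal_mul_I_re, Complex.zero_re] at h2
  exact h2

lemma sin_sum_eq_zero (m : ℕ) (hm : 0 < m) (d : ℤ) (hd : ¬ ((m:ℤ) ∣ d)) :
    ∑ f ∈ range m, Real.sin (2 * Real.pi * d * f / m) = 0 := by
  have h := exp_sum_eq_zero m hm d hd
  have h2 := congrArg Complex.im h
  rw [Complex.im_sum] at h2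
  simp only [Complex.exp_ofReal_mul_I_im, Complex.zero_im] at h2
  exact h2


lemma cos_reflect (m : ℕ) (hm : 0 < m) (d : ℤ) (f : ℕ) (hf : f ≤ m) :
    Real.cos (2 * Real.pi * d * ((m - f : ℕ)) / m) = Real.cos (2 * Real.pi * d * f / m) := by
  have hmr : (m : ℝ) ≠ 0 := by positivity
  have harg : (2 * Real.pi * d * ((m - f : ℕ)) / m) = -(2 * Real.pi * d * f / m) + d * (2 * Real.pi) := by
    have hc : ((m - f : ℕ) : ℝ) = (m : ℝ) - f := by
      push_cast [Nat.cast_sub hf]; ring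
    rw [hc]
    field_simp
    ring
  rw [harg, Real.cos_add_int_mul_two_pi, Real.cos_neg]

lemma half_cos_sum (h : ℕ) (hh : 0 < h) (d : ℤ) (hd : ¬ (((2*h : ℕ)):ℤ) ∣ d) :
    2 * ∑ f ∈ Finset.Ico 1 h, Real.cos (2 * Real.pi * d * f / (2*h : ℕ))
      = -1 - Real.cos (Real.pi * d) := by
  set m : ℕ := 2 * h with hm
  have hm0 : 0 < m := by omega
  have htot : ∑ f ∈ range m, Real.cos (2 * Real.pi * d * f / m) = 0 :=
    cos_sum_eq_zero m hm0 d hd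
  have hsplit : ∑ f ∈ range m, Real.cos (2 * Real.pi * d * f / m)
      = Real.cos ((2 : ℝ) * Real.pi * d * (0:ℕ) / m)
        + (∑ f ∈ Finset.Ico 1 h, Real.cos (2 * Real.pi * d * f / m))
        + (Real.cos (2 * Real.pi * d * (h:ℕ) / m)
        + ∑ f ∈ Finset.Ico (h+1) m, Real.cos (2 * Real.pi * d * f / m)) := by
    rw [Finset.range_eq_Ico]
    rw [← Finset.sum_Ico_consecutive _ (by omega : 0 ≤ h) (by omega : h ≤ m)]
    rw [Finset.sum_eq_sum_Ico_succ_bot (by omega : 0 < h)]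
    rw [Finset.sum_eq_sum_Ico_succ_bot (by omega : h < m)]
  have hrefl : ∑ f ∈ Finset.Ico (h+1) m, Real.cos (2 * Real.pi * d * f / m)
      = ∑ f ∈ Finset.Ico 1 h, Real.cos (2 * Real.pi * d * f / m) := by
    apply Finset.sum_nbij' (fun f => m - f) (fun f => m - f)
    · intro a ha; simp only [Finset.mem_Ico] at *; omega
    · intro a ha; simp only [Finset.mem_Ico] at *; omega
    · intro a ha; simp only [Finset.mem_Ico] at ha; omega
    · intro a ha; simp only [Finset.mem_Ico] at ha; omega
    · intro a ha
      simp only [Finset.mem_Ico] at ha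
      exact (cos_reflect m hm0 d a (by omega)).symm
  have hcosh : Real.cos (2 * Real.pi * d * (h:ℕ) / m) = Real.cos (Real.pi * d) := by
    congr 1
    have hmm : (m : ℝ) = 2 * h := by push_cast [hm]; ring
    have hhne : (h : ℝ) ≠ 0 := by positivity
    rw [hmm]
    field_simp
  have hzero : Real.cos ((2 : ℝ) * Real.pi * d * (0:ℕ) / m) = 1 := by
    norm_num
  rw [hsplit, hrefl, hcosh, hzero] at htot
  linarith

lemma cos_pi_int (d : ℤ) : Real.cos (Real.pi * d) = (-1 : ℝ) ^ d := by
  have := Real.cos_add_int_mul_pi 0 d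
  simpa [mul_comm] using this


lemma abs_cos_le (m : ℕ) (hm : 2 ≤ m) {x : ℝ} (hx1 : Real.pi / m ≤ x) (hx2 : x ≤ Real.pi - Real.pi / m) :
    |Real.cos x| ≤ Real.cos (Real.pi / m) := by
  have hpi := Real.pi_pos
  have hm0 : (0:ℝ) < m := by positivity
  have hpm : 0 < Real.pi / m := by positivity
  refine abs_le.mpr ⟨?_, ?_⟩
  · have : Real.cos (Real.pi - x) ≤ Real.cos (Real.pi / m) := by
      apply Real.cos_le_cos_of_nonneg_of_le_pi hpm.le
      · linarith
      · linarith
    rw [Real.cos_pi_sub] at this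
    linarith
  · apply Real.cos_le_cos_of_nonneg_of_le_pi hpm.le
    · linarith
    · exact hx1

lemma abs_cos_odd (m : ℕ) (hm : 2 ≤ m) (hme : m % 2 = 0) (a : ℤ) (ha : Odd a) :
    |Real.cos (Real.pi * a / m)| ≤ Real.cos (Real.pi / m) := by
  have hpi := Real.pi_pos
  have hm0 : (0:ℝ) < m := by positivity
  set q : ℤ := a / m with hq
  set r : ℤ := a % m with hr
  have hdiv : (m:ℤ) * q + r = a := Int.mul_ediv_add_emod a m
  have hr0 : 0 ≤ r := Int.emod_nonneg a (by positivity)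
  have hrm : r < m := Int.emod_lt_of_pos a (by exact_mod_cast Nat.lt_of_lt_of_le Nat.zero_lt_two hm)
  have hrodd : Odd r := by
    rcases ha with ⟨c, hc⟩
    have hmeZ : (2:ℤ) ∣ (m:ℤ) := by
      have h2 : (2:ℕ) ∣ m := Nat.dvd_of_mod_eq_zero hme
      exact_mod_cast Int.natCast_dvd_natCast.mpr h2
    obtain ⟨e, he⟩ := hmeZ
    refine ⟨c - e * q, ?_⟩
    linear_combination hc + hdiv - q * he
  have hr1 : 1 ≤ r := by
    rcases hrodd with ⟨c, hc⟩; omega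
  have hrm1 : r ≤ m - 1 := by omega
  have harg : Real.pi * a / m = Real.pi * r / m + q * Real.pi := by
    have hh : (a:ℝ) = (m:ℝ) * q + r := by exact_mod_cast congrArg (Int.cast : ℤ → ℝ) hdiv.symm
    rw [hh]
    field_simp
    ring
  rw [harg, Real.cos_add_int_mul_pi, abs_mul]
  have habs1 : |((-1:ℝ)) ^ q| = 1 := by
    rcases Int.even_or_odd q with hq' | hq'
    · rw [hq'.neg_one_zpow]; simp
    · rw [hq'.neg_one_zpow]; simp
  rw [habs1, one_mul]
  have hpm : (0:ℝ) < Real.pi / m := by positivity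
  have hr1' : (1:ℝ) ≤ (r:ℝ) := by exact_mod_cast hr1
  have hrr : (r:ℝ) ≤ (m:ℝ) - 1 := by
    have h3 : (r:ℝ) ≤ (((m:ℤ) - 1 : ℤ) : ℝ) := by exact_mod_cast hrm1
    push_cast at h3
    linarith
  apply abs_cos_le m hm
  · have := mul_le_mul_of_nonneg_right hr1' hpm.le
    calc Real.pi / m = 1 * (Real.pi / m) := by ring
    _ ≤ (r:ℝ) * (Real.pi / m) := this
    _ = Real.pi * r / m := by ring
  · have h4 := mul_le_mul_of_nonneg_right hrr hpm.le
    have h5 : ((m:ℝ) - 1) * (Real.pi / m) = Real.pi - Real.pi / m := by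
      field_simp
    calc Real.pi * r / m = (r:ℝ) * (Real.pi / m) := by ring
    _ ≤ ((m:ℝ) - 1) * (Real.pi / m) := h4
    _ = Real.pi - Real.pi / m := h5


noncomputable def cst (m : ℕ) : ℝ := 1 / (2 * Real.cos (Real.pi / m))

noncomputable def Ent (m i k : ℕ) : ℝ :=
  if k + 1 < m / 2 then cst m * Real.cos (Real.pi * (2*i*(k+1) + 1 : ℕ) / m)
  else if k + 1 = m / 2 then (cst m / Real.sqrt 2) * (-1 : ℝ)^i
  else cst m * Real.sin (Real.pi * (2*i*(k+1 - m/2) + 1 : ℕ) / m)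

lemma cos_pos_of_m (m : ℕ) (hm : 4 ≤ m) : Real.sqrt 2 / 2 ≤ Real.cos (Real.pi / m) := by
  have hpi := Real.pi_pos
  have hm0 : (0:ℝ) < m := by positivity
  have h4 : (4:ℝ) ≤ m := by exact_mod_cast hm
  have h1 : Real.pi / m ≤ Real.pi / 4 := by
    apply div_le_div_of_nonneg_left hpi.le (by norm_num) h4
  have := Real.cos_le_cos_of_nonneg_of_le_pi (by positivity : (0:ℝ) ≤ Real.pi / m)
    (by linarith [Real.pi_pos] : Real.pi / 4 ≤ Real.pi) h1
  rw [Real.cos_pi_div_four] at this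
  linarith

lemma cst_pos (m : ℕ) (hm : 4 ≤ m) : 0 < cst m := by
  have h := cos_pos_of_m m hm
  have hcpos : (0:ℝ) < Real.cos (Real.pi / m) := lt_of_lt_of_le (by positivity) h
  unfold cst
  positivity

lemma cst_cos (m : ℕ) (hm : 4 ≤ m) : cst m * Real.cos (Real.pi / m) = 1 / 2 := by
  have h := cos_pos_of_m m hm
  have hc : Real.cos (Real.pi / m) ≠ 0 := by
    have hcpos : (0:ℝ) < Real.cos (Real.pi / m) := lt_of_lt_of_le (by positivity) h
    positivity
  unfold cst
  field_simp

lemma sum_split (h : ℕ) (hh : 1 ≤ h) (F : ℕ → ℝ) :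
    ∑ k ∈ range (2*h - 1), F k
      = (∑ f ∈ range (h-1), F f) + F (h-1) + ∑ f ∈ range (h-1), F (h + f) := by
  have h1 : 2*h - 1 = h + (h - 1) := by omega
  have h2 : h = (h - 1) + 1 := by omega
  have h3 : ∑ k ∈ range h, F k = (∑ f ∈ range (h-1), F f) + F (h-1) := by
    conv_lhs => rw [h2]
    rw [Finset.sum_range_succ]
  rw [h1, Finset.sum_range_add, h3]

lemma not_dvd_of_lt (m : ℕ) (d : ℤ) (hd0 : d ≠ 0) (hd : |d| < m) : ¬ ((m:ℤ) ∣ d) := by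
  intro hdvd
  have h1 : (m:ℤ) ≤ |d| := Int.le_of_dvd (abs_pos.mpr hd0) ((dvd_abs (m:ℤ) d).mpr hdvd)
  omega


lemma ent_branches (m : ℕ) (hm0 : 4 ≤ m) :
    (∀ a f : ℕ, f < m/2 - 1 → Ent m a f = cst m * Real.cos (Real.pi * (2*a*(f+1) + 1 : ℕ) / m)) ∧
    (∀ a : ℕ, Ent m a (m/2 - 1) = (cst m / Real.sqrt 2) * (-1:ℝ)^a) ∧
    (∀ a f : ℕ, f < m/2 - 1 → Ent m a (m/2 + f)
      = cst m * Real.sin (Real.pi * (2*a*(f+1) + 1 : ℕ) / m)) := by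
  refine ⟨?_, ?_, ?_⟩
  · intro a f hf; unfold Ent; rw [if_pos (by omega)]
  · intro a; unfold Ent; rw [if_neg (by omega), if_pos (by omega)]
  · intro a f hf; unfold Ent
    rw [if_neg (by omega), if_neg (by omega),
      show m/2 + f + 1 - m/2 = f + 1 from by omega]

lemma rowdot (m : ℕ) (hm4 : m % 4 = 0) (hm0 : 0 < m) (i j : ℕ) (hi : i < m) (hj : j < m) :
    ∑ k ∈ range (m - 1), Ent m i k * Ent m j k
      = (cst m)^2 * ((if i = j then (m:ℝ) else 0) - 1) / 2 := by
  have hm4' : 4 ≤ m := by omega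
  set h := m / 2 with hhdef
  have hm2 : m = 2 * h := by omega
  have hh1 : 1 ≤ h := by omega
  obtain ⟨ecos, ealt, esin⟩ := ent_branches m hm4'
  have hsp := sum_split h hh1 (fun k => Ent m i k * Ent m j k)
  rw [show m - 1 = 2*h - 1 from by omega, hsp]
  set d : ℤ := (i:ℤ) - j with hd
  have key : ∀ f, f < h - 1 → Ent m i f * Ent m j f + Ent m i (h+f) * Ent m j (h+f)
      = (cst m)^2 * Real.cos (2 * Real.pi * d * ((f+1:ℕ):ℝ) / m) := by
    intro f hf
    rw [ecos i f hf, ecos j f hf, esin i f hf, esin j f hf]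
    have harg : Real.cos (2 * Real.pi * d * ((f+1:ℕ):ℝ) / m)
        = Real.cos (Real.pi * (2*i*(f+1)+1 : ℕ)/m - Real.pi * (2*j*(f+1)+1 : ℕ)/m) := by
      congr 1; rw [hd]; push_cast; ring
    rw [harg, Real.cos_sub]; ring
  have hAB : (∑ f ∈ range (h-1), Ent m i f * Ent m j f)
        + (∑ f ∈ range (h-1), Ent m i (h+f) * Ent m j (h+f))
      = (cst m)^2 * ∑ f ∈ range (h-1), Real.cos (2 * Real.pi * d * ((f+1:ℕ):ℝ) / m) := by
    rw [← Finset.sum_add_distrib, Finset.mul_sum]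
    exact Finset.sum_congr rfl (fun f hf => key f (Finset.mem_range.mp hf))
  have hM : Ent m i (h-1) * Ent m j (h-1) = (cst m)^2 / 2 * ((-1:ℝ)^i * (-1)^j) := by
    rw [ealt i, ealt j]
    have h2 : (Real.sqrt 2) * (Real.sqrt 2) = 2 := Real.mul_self_sqrt (by norm_num)
    have h2' : (Real.sqrt 2) ≠ 0 := by positivity
    field_simp
    ring_nf
    rw [Real.sq_sqrt (by norm_num)]
  by_cases hij : i = j
  · subst hij
    have hdz : d = 0 := by simp [hd]
    have hcos1 : ∀ f ∈ range (h-1), Real.cos (2 * Real.pi * d * ((f+1:ℕ):ℝ) / m) = 1 := by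
      intro f _; rw [hdz]; norm_num
    rw [if_pos rfl]
    have hs : ∑ f ∈ range (h-1), Real.cos (2 * Real.pi * d * ((f+1:ℕ):ℝ) / m) = ((h:ℝ) - 1) := by
      rw [Finset.sum_congr rfl hcos1, Finset.sum_const, Finset.card_range]
      have : ((h-1:ℕ):ℝ) = (h:ℝ) - 1 := by
        push_cast [Nat.cast_sub hh1]; ring
      simp [this]
    have hneg : ((-1:ℝ)^i * (-1)^i) = 1 := by
      rw [← pow_add]; exact Even.neg_one_pow ⟨i, by ring⟩
    have hmr : (m:ℝ) = 2*h := by exact_mod_cast congrArg (Nat.cast : ℕ → ℝ) hm2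
    calc (∑ f ∈ range (h-1), Ent m i f * Ent m i f) + Ent m i (h-1) * Ent m i (h-1)
          + ∑ f ∈ range (h-1), Ent m i (h+f) * Ent m i (h+f)
        = ((∑ f ∈ range (h-1), Ent m i f * Ent m i f)
          + ∑ f ∈ range (h-1), Ent m i (h+f) * Ent m i (h+f))
          + Ent m i (h-1) * Ent m i (h-1) := by ring
      _ = (cst m)^2 * ((h:ℝ) - 1) + (cst m)^2/2 * 1 := by rw [hAB, hs, hM, hneg]
      _ = (cst m)^2 * ((m:ℝ) - 1) / 2 := by rw [hmr]; ring
  · have hdne : d ≠ 0 := by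
      simp only [hd, sub_ne_zero]
      exact_mod_cast fun hc => hij (by exact_mod_cast hc)
    have habs : |d| < m := by
      rw [hd]; rw [abs_sub_lt_iff]; constructor <;> [skip; skip] <;> omega
    have hdvd : ¬ (((2*h:ℕ)):ℤ) ∣ d := by
      rw [← hm2]; exact not_dvd_of_lt m d hdne habs
    have hhalf := half_cos_sum h (by omega) d hdvd
    have hcast : ((2*h:ℕ):ℝ) = (m:ℝ) := by exact_mod_cast congrArg (Nat.cast : ℕ → ℝ) hm2.symm
    rw [hcast] at hhalf
    have hs : ∑ f ∈ range (h-1), Real.cos (2 * Real.pi * d * ((f+1:ℕ):ℝ) / m)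
        = ∑ f ∈ Finset.Ico 1 h, Real.cos (2 * Real.pi * d * (f:ℕ) / m) := by
      rw [Finset.sum_Ico_eq_sum_range]
      apply Finset.sum_congr rfl
      intro x _
      congr 2
      push_cast; ring
    have hcospd : Real.cos (Real.pi * d) = (-1:ℝ)^i * (-1)^j := by
      have harg2 : Real.pi * (d:ℝ) = (i:ℕ)*Real.pi - (j:ℕ)*Real.pi := by push_cast [hd]; ring
      rw [harg2, Real.cos_sub, Real.sin_nat_mul_pi, Real.sin_nat_mul_pi]
      have hci : ∀ a : ℕ, Real.cos ((a:ℕ)*Real.pi) = (-1:ℝ)^a := by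
        intro a; simpa using Real.cos_add_nat_mul_pi 0 a
      rw [hci i, hci j]; ring
    rw [if_neg hij]
    have hsum2 : ∑ f ∈ Finset.Ico 1 h, Real.cos (2 * Real.pi * d * (f:ℕ) / m)
        = (-1 - Real.cos (Real.pi * d)) / 2 := by linarith
    calc (∑ f ∈ range (h-1), Ent m i f * Ent m j f) + Ent m i (h-1) * Ent m j (h-1)
          + ∑ f ∈ range (h-1), Ent m i (h+f) * Ent m j (h+f)
        = ((∑ f ∈ range (h-1), Ent m i f * Ent m j f)
          + ∑ f ∈ range (h-1), Ent m i (h+f) * Ent m j (h+f))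
          + Ent m i (h-1) * Ent m j (h-1) := by ring
      _ = (cst m)^2 * ((-1 - Real.cos (Real.pi * d)) / 2)
          + (cst m)^2/2 * (Real.cos (Real.pi * d)) := by rw [hAB, hs, hsum2, hM, hcospd]
      _ = (cst m)^2 * ((0:ℝ) - 1) / 2 := by ring


lemma colsum (m : ℕ) (hm4 : m % 4 = 0) (hm0 : 0 < m) (k : ℕ) (hk : k < m - 1) :
    ∑ i ∈ range m, Ent m i k = 0 := by
  have hm4' : 4 ≤ m := by omega
  obtain ⟨ecos, ealt, esin⟩ := ent_branches m hm4'
  have hmr : (m:ℝ) ≠ 0 := by positivity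
  rcases lt_trichotomy (k+1) (m/2) with hlt | heq | hgt
  · -- cosine column, frequency f = k+1
    have hf : k < m/2 - 1 := by omega
    have hdvd : ¬ ((m:ℤ) ∣ ((k+1 : ℕ) : ℤ)) := by
      apply not_dvd_of_lt m _ (by exact_mod_cast Nat.succ_ne_zero k)
      rw [abs_of_nonneg (by positivity)]
      exact_mod_cast (by omega : k + 1 < m)
    have hc := cos_sum_eq_zero m hm0 ((k+1 : ℕ) : ℤ) hdvd
    have hs := sin_sum_eq_zero m hm0 ((k+1 : ℕ) : ℤ) hdvd
    calc ∑ i ∈ range m, Ent m i k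
        = ∑ i ∈ range m, (cst m * Real.cos (Real.pi / m)
            * Real.cos (2 * Real.pi * ((k+1:ℕ):ℤ) * (i:ℕ) / m)
          - cst m * Real.sin (Real.pi / m)
            * Real.sin (2 * Real.pi * ((k+1:ℕ):ℤ) * (i:ℕ) / m)) := by
          apply Finset.sum_congr rfl
          intro i _
          rw [ecos i k hf]
          have harg : Real.pi * ((2*i*(k+1) + 1 : ℕ):ℝ) / m
              = 2 * Real.pi * ((k+1:ℕ):ℤ) * (i:ℕ) / m + Real.pi / m := by
            push_cast; field_simp
          rw [harg, Real.cos_add]; ring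
      _ = cst m * Real.cos (Real.pi / m)
            * (∑ i ∈ range m, Real.cos (2 * Real.pi * ((k+1:ℕ):ℤ) * (i:ℕ) / m))
          - cst m * Real.sin (Real.pi / m)
            * (∑ i ∈ range m, Real.sin (2 * Real.pi * ((k+1:ℕ):ℤ) * (i:ℕ) / m)) := by
          rw [Finset.sum_sub_distrib, Finset.mul_sum, Finset.mul_sum]
      _ = 0 := by rw [hc, hs]; ring
  · -- alternating column
    have hk' : k = m/2 - 1 := by omega
    subst hk'
    have : ∑ i ∈ range m, Ent m i (m/2 - 1)
        = (cst m / Real.sqrt 2) * ∑ i ∈ range m, (-1:ℝ)^i := by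
      rw [Finset.mul_sum]
      exact Finset.sum_congr rfl (fun i _ => ealt i)
    rw [this, neg_one_geom_sum, if_pos ⟨m/2, by omega⟩, mul_zero]
  · -- sine column, frequency f = k+1-m/2
    set f : ℕ := k + 1 - m/2 with hfdef
    have hf1 : 1 ≤ f := by omega
    have hfh : f < m/2 - 1 + 1 := by omega
    have hkk : k = m/2 + (f - 1) := by omega
    have hdvd : ¬ ((m:ℤ) ∣ ((f : ℕ) : ℤ)) := by
      apply not_dvd_of_lt m _ (by exact_mod_cast (by omega : f ≠ 0))
      rw [abs_of_nonneg (by positivity)]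
      exact_mod_cast (by omega : f < m)
    have hc := cos_sum_eq_zero m hm0 ((f : ℕ) : ℤ) hdvd
    have hs := sin_sum_eq_zero m hm0 ((f : ℕ) : ℤ) hdvd
    calc ∑ i ∈ range m, Ent m i k
        = ∑ i ∈ range m, (cst m * Real.cos (Real.pi / m)
            * Real.sin (2 * Real.pi * ((f:ℕ):ℤ) * (i:ℕ) / m)
          + cst m * Real.sin (Real.pi / m)
            * Real.cos (2 * Real.pi * ((f:ℕ):ℤ) * (i:ℕ) / m)) := by
          apply Finset.sum_congr rfl
          intro i _
          rw [hkk, esin i (f-1) (by omega)]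
          have harg : Real.pi * ((2*i*((f-1)+1) + 1 : ℕ):ℝ) / m
              = 2 * Real.pi * ((f:ℕ):ℤ) * (i:ℕ) / m + Real.pi / m := by
            push_cast [Nat.cast_sub hf1]
            field_simp; ring
          rw [harg, Real.sin_add]; ring
      _ = cst m * Real.cos (Real.pi / m)
            * (∑ i ∈ range m, Real.sin (2 * Real.pi * ((f:ℕ):ℤ) * (i:ℕ) / m))
          + cst m * Real.sin (Real.pi / m)
            * (∑ i ∈ range m, Real.cos (2 * Real.pi * ((f:ℕ):ℤ) * (i:ℕ) / m)) := by
          rw [Finset.sum_add_distrib, Finset.mul_sum, Finset.mul_sum]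
      _ = 0 := by rw [hc, hs]; ring

lemma ent_bound (m : ℕ) (hm4 : m % 4 = 0) (hm0 : 0 < m) (i k : ℕ) :
    |Ent m i k| ≤ 1/2 := by
  have hm4' : 4 ≤ m := by omega
  have hm2' : 2 ≤ m := by omega
  have hme : m % 2 = 0 := by omega
  have hcos := cos_pos_of_m m hm4'
  have hcpos : (0:ℝ) < Real.cos (Real.pi / m) := lt_of_lt_of_le (by positivity) hcos
  have hcstpos := cst_pos m hm4'
  have hcc := cst_cos m hm4'
  unfold Ent
  split_ifs with h1 h2
  · -- cosine entry
    rw [abs_mul, abs_of_pos hcstpos]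
    have hodd : Odd ((2*i*(k+1) + 1 : ℕ) : ℤ) := ⟨(i*(k+1) : ℕ), by push_cast; ring⟩
    have hb := abs_cos_odd m hm2' hme _ hodd
    have harg : Real.pi * ((2*i*(k+1) + 1 : ℕ):ℝ) / m
        = Real.pi * (((2*i*(k+1) + 1 : ℕ) : ℤ) : ℝ) / m := by push_cast; ring
    rw [harg]
    calc cst m * |Real.cos (Real.pi * (((2*i*(k+1) + 1 : ℕ) : ℤ) : ℝ) / m)|
        ≤ cst m * Real.cos (Real.pi / m) := by
          exact mul_le_mul_of_nonneg_left hb hcstpos.le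
      _ = 1/2 := hcc
  · -- alternating entry
    rw [abs_mul]
    have ha : |(-1:ℝ)^i| = 1 := by
      rw [abs_pow, abs_neg, abs_one, one_pow]
    rw [ha, mul_one]
    have hs2 : (0:ℝ) < Real.sqrt 2 := by positivity
    rw [abs_of_pos (by positivity)]
    rw [div_le_iff₀ hs2] at *
    have h2 : Real.sqrt 2 * Real.sqrt 2 = 2 := Real.mul_self_sqrt (by norm_num)
    -- cst m ≤ √2/2 · ... : cst m * 2 ≤ √2 ⇔ 1/(2cos) * 2 ≤ √2 ⇔ 1/cos ≤ √2 ⇔ 1 ≤ √2 cos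
    have hkey : Real.sqrt 2 * Real.cos (Real.pi / m) ≥ 1 := by
      nlinarith [hcos, hs2]
    unfold cst
    rw [div_le_iff₀ (by positivity)]
    nlinarith [hcpos, hs2]
  · -- sine entry
    rw [abs_mul, abs_of_pos hcstpos]
    set a : ℤ := ((2*i*(k+1 - m/2) + 1 : ℕ) : ℤ) with hadef
    have hodd : Odd a := ⟨(i*(k+1-m/2) : ℕ), by rw [hadef]; push_cast; ring⟩
    have hh : m / 2 = 2 * (m / 4) := by omega
    have hhodd : Odd ((m/2 : ℕ) - a : ℤ) := by
      apply Even.sub_odd _ hodd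
      exact ⟨(m/4 : ℕ), by push_cast [hh]; ring⟩
    have hb := abs_cos_odd m hm2' hme _ hhodd
    have harg : Real.sin (Real.pi * ((2*i*(k+1 - m/2) + 1 : ℕ):ℝ) / m)
        = Real.cos (Real.pi * ((((m/2 : ℕ) : ℤ) - a : ℤ) : ℝ) / m) := by
      have hq0 : (0:ℕ) < m/2 := by omega
      have hqr : ((m/2:ℕ):ℝ) ≠ 0 := by positivity
      have hmne : (m:ℝ) ≠ 0 := by positivity
      have hq : ((m/2:ℕ):ℝ) * 2 = (m:ℝ) := by
        exact_mod_cast congrArg (Nat.cast : ℕ → ℝ) (by omega : m/2*2 = m)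
      have hhalf : Real.pi/2 = Real.pi * ((m/2:ℕ):ℝ) / m := by
        rw [← hq]; field_simp
      rw [← Real.cos_pi_div_two_sub]
      congr 1
      rw [hhalf, hadef]
      push_cast
      rw [show ((m:ℤ)/2 : ℤ) = ((m/2:ℕ) : ℤ) from by omega, Int.cast_natCast]
      ring
    rw [harg]
    calc cst m * |Real.cos (Real.pi * ((((m/2 : ℕ) : ℤ) - a : ℤ) : ℝ) / m)|
        ≤ cst m * Real.cos (Real.pi / m) := mul_le_mul_of_nonneg_left hb hcstpos.le
      _ = 1/2 := hcc


end Stmt6Aux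

open Stmt6Aux

/-- If n+1 ≡ 0 (mod 4), then f₀(n) ≥ √(n+1)/(2 cos(π/(n+1))). -/
theorem stmt6 (n : ℕ) (hn : (n + 1) % 4 = 0) :
    f0 n ≥ Real.sqrt (n + 1) / (2 * Real.cos (Real.pi / (n + 1))) := by
  set m := n + 1 with hmdef
  have hm4 : m % 4 = 0 := hn
  have hm0 : 0 < m := Nat.succ_pos n
  have hm4' : 4 ≤ m := by omega
  have hcos := cos_pos_of_m m hm4'
  have hcstpos := cst_pos m hm4'
  set ℓ : ℝ := Real.sqrt m * cst m with hl
  have hmem : simplexInCube n ℓ := by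
    refine ⟨fun i => (WithLp.toLp 2 (fun k : Fin n => Ent m i.val k.val) : EuclideanSpace ℝ (Fin n)), ?_, ?_, ?_⟩
    · intro i j hij
      have hij' : i.val ≠ j.val := fun h => hij (Fin.ext h)
      rw [EuclideanSpace.dist_eq]
      have hsum : ∑ k : Fin n, dist (Ent m i.val k.val) (Ent m j.val k.val) ^ 2
          = (cst m)^2 * m := by
        have hrw : ∀ k : Fin n, dist (Ent m i.val k.val) (Ent m j.val k.val) ^ 2
            = (Ent m i.val k.val - Ent m j.val k.val)^2 := by
          intro k; rw [Real.dist_eq, sq_abs]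
        rw [Finset.sum_congr rfl (fun k _ => hrw k)]
        rw [Fin.sum_univ_eq_sum_range (fun k => (Ent m i.val k - Ent m j.val k)^2) n]
        have e1 := rowdot m hm4 hm0 i.val i.val i.isLt i.isLt
        have e2 := rowdot m hm4 hm0 i.val j.val i.isLt j.isLt
        have e3 := rowdot m hm4 hm0 j.val j.val j.isLt j.isLt
        rw [show m - 1 = n from by omega] at e1 e2 e3
        rw [if_pos rfl] at e1 e3
        rw [if_neg hij'] at e2
        have expand : ∑ k ∈ Finset.range n, (Ent m i.val k - Ent m j.val k)^2
            = (∑ k ∈ Finset.range n, Ent m i.val k * Ent m i.val k)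
              - 2 * (∑ k ∈ Finset.range n, Ent m i.val k * Ent m j.val k)
              + ∑ k ∈ Finset.range n, Ent m j.val k * Ent m j.val k := by
          rw [Finset.mul_sum, ← Finset.sum_sub_distrib, ← Finset.sum_add_distrib]
          exact Finset.sum_congr rfl (fun k _ => by ring)
        rw [expand, e1, e2, e3]
        ring
      rw [hsum]
      have hms : (0:ℝ) ≤ (m:ℝ) := by positivity
      have hkey : (cst m)^2 * m = ℓ^2 := by
        rw [hl, mul_pow, Real.sq_sqrt hms]; ring
      rw [hkey, Real.sqrt_sq (by positivity)]
    · ext k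
      have happ : (∑ i : Fin (n+1), (fun i => (WithLp.toLp 2 (fun k : Fin n => Ent m i.val k.val) : EuclideanSpace ℝ (Fin n))) i) k
          = ∑ i : Fin (n+1), Ent m i.val k.val := by
        simp
      have hz : ∑ i : Fin (n+1), Ent m i.val k.val = 0 := by
        rw [Fin.sum_univ_eq_sum_range (fun i => Ent m i k.val) (n+1)]
        exact colsum m hm4 hm0 k.val (by omega)
      rw [happ, hz]
      rfl
    · intro i k
      exact ent_bound m hm4 hm0 i.val k.val
  have hbdd : BddAbove {x : ℝ | simplexInCube n x} := by
    refine ⟨Real.sqrt n, ?_⟩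
    rintro x ⟨p, hdist, hsum0, hbound⟩
    have h01 : (0 : Fin (n+1)) ≠ 1 := by
      intro h
      have hv := congrArg Fin.val h
      rw [Fin.val_zero, Fin.val_one'] at hv
      have : 1 % (n+1) = 1 := Nat.mod_eq_of_lt (by omega)
      omega
    rw [← hdist 0 1 h01, EuclideanSpace.dist_eq]
    have hle : ∑ k : Fin n, dist (p 0 k) (p 1 k) ^ 2 ≤ (n : ℝ) := by
      calc ∑ k : Fin n, dist (p 0 k) (p 1 k) ^ 2 ≤ ∑ _k : Fin n, (1:ℝ) := by
            apply Finset.sum_le_sum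
            intro k _
            have hd1 : dist (p 0 k) (p 1 k) ≤ 1 := by
              rw [Real.dist_eq]
              have := hbound 0 k
              have := hbound 1 k
              calc |p 0 k - p 1 k| ≤ |p 0 k| + |p 1 k| := abs_sub _ _
                _ ≤ 1 := by linarith [hbound 0 k, hbound 1 k]
            calc dist (p 0 k) (p 1 k) ^ 2 ≤ 1^2 := by
                  exact pow_le_pow_left₀ dist_nonneg hd1 2
              _ = 1 := one_pow 2
        _ = (n:ℝ) := by simp
    exact Real.sqrt_le_sqrt hle
  have hrhs : Real.sqrt ((n:ℝ) + 1) / (2 * Real.cos (Real.pi / ((n:ℝ) + 1))) = ℓ := by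
    have hcast : ((n:ℝ) + 1) = (m:ℝ) := by push_cast [hmdef]; ring
    rw [hl, hcast]
    unfold cst
    ring
  rw [ge_iff_le, hrhs]
  exact le_csSup hbdd hmem
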